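/- Let 0 < β ≤ α and set T = (α−β)²/(8β). Then for all real x, y with β ≤ x ≤ α and β ≤ y ≤ α, one has 2 − 2·exp(−(1/2)(√x − √y)²) ≥ ((1 − e^{−T})/(4αT)) · (x − y)². -/

import Mathlib

open Real

lemma exp_secant_bound (T s : ℝ) (hT : 0 < T) (hs : 0 ≤ s) (hsT : s ≤ T) :
    (1 - Real.exp (-T)) / T * s ≤ 1 - Real.exp (-s) := by
  have ha : (0:ℝ) ≤ s / T := div_nonneg hs hT.le
  have hb : (0:ℝ) ≤ 1 - s / T := by
    have := (div_le_one hT).2 hsT; linarith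
  have hconv := convexOn_exp.2 (Set.mem_univ (-T)) (Set.mem_univ (0:ℝ)) ha hb (by ring)
  rw [smul_eq_mul, smul_eq_mul, smul_eq_mul, smul_eq_mul, Real.exp_zero] at hconv
  have h1 : s / T * (-T) + (1 - s / T) * 0 = -s := by field_simp; ring
  rw [h1] at hconv
  have h2 : s / T * T = s := div_mul_cancel₀ s hT.ne'
  rw [div_mul_eq_mul_div, div_le_iff₀ hT]
  nlinarith [mul_le_mul_of_nonneg_right hconv hT.le, h2,
    Real.exp_nonneg (-T), Real.exp_nonneg (-s)]

/-- For `β ≤ x, y ≤ α` with `0 < β ≤ α` and `T = (α−β)²/(8β)`, the squared Hellinger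
distance between `Poisson(x)` and `Poisson(y)` satisfies
`2 − 2 exp(−(1/2)(√x − √y)²) ≥ ((1 − e^{−T})/(4αT)) (x − y)²`. -/
theorem hellinger_sq_lower_bound (α β x y : ℝ) (hβ : 0 < β) (hβα : β ≤ α)
    (hx1 : β ≤ x) (hx2 : x ≤ α) (hy1 : β ≤ y) (hy2 : y ≤ α) :
    (1 - Real.exp (-((α - β) ^ 2 / (8 * β)))) / (4 * α * ((α - β) ^ 2 / (8 * β)))
        * (x - y) ^ 2 ≤
      2 - 2 * Real.exp (-(1 / 2) * (Real.sqrt x - Real.sqrt y) ^ 2) := by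
  rcases eq_or_lt_of_le hβα with hab | hab
  · -- α = β forces x = y; both sides reduce
    have hx : x = α := le_antisymm hx2 (hab ▸ hx1)
    have hy : y = α := le_antisymm hy2 (hab ▸ hy1)
    subst hx; subst hy
    simp [← hab]
  · set T : ℝ := (α - β) ^ 2 / (8 * β) with hTdef
    have hT : 0 < T := div_pos (pow_pos (by linarith) 2) (by positivity)
    set a := Real.sqrt x with hadef
    set b := Real.sqrt y with hbdef
    have hx0 : (0:ℝ) ≤ x := le_trans hβ.le hx1
    have hy0 : (0:ℝ) ≤ y := le_trans hβ.le hy1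
    have ha2 : a ^ 2 = x := Real.sq_sqrt hx0
    have hb2 : b ^ 2 = y := Real.sq_sqrt hy0
    have haβ : Real.sqrt β ≤ a := Real.sqrt_le_sqrt hx1
    have hbβ : Real.sqrt β ≤ b := Real.sqrt_le_sqrt hy1
    have haα : a ≤ Real.sqrt α := Real.sqrt_le_sqrt hx2
    have hbα : b ≤ Real.sqrt α := Real.sqrt_le_sqrt hy2
    have hsβ : Real.sqrt β ^ 2 = β := Real.sq_sqrt hβ.le
    have hsα : Real.sqrt α ^ 2 = α := Real.sq_sqrt (hβ.le.trans hβα)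
    have hsβ0 : 0 < Real.sqrt β := Real.sqrt_pos.2 hβ
    set s : ℝ := (1/2) * (a - b) ^ 2 with hsdef
    have hs0 : 0 ≤ s := by positivity
    -- (x - y)^2 = (a-b)^2 * (a+b)^2
    have hxy : (x - y) ^ 2 = (a - b) ^ 2 * (a + b) ^ 2 := by
      rw [← ha2, ← hb2]; ring
    have hab2 : 4 * β ≤ (a + b) ^ 2 := by
      have h1 : 2 * Real.sqrt β ≤ a + b := by linarith
      have h2 := pow_le_pow_left₀ (by positivity) h1 2
      nlinarith [h2, hsβ]
    have hxyab : (x - y) ^ 2 ≤ (α - β) ^ 2 := sq_le_sq' (by linarith) (by linarith)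
    -- s ≤ T
    have hsT : s ≤ T := by
      rw [hsdef, hTdef, le_div_iff₀ (by positivity : (0:ℝ) < 8 * β)]
      have h1 : 4 * β * (a - b) ^ 2 ≤ (a + b) ^ 2 * (a - b) ^ 2 :=
        mul_le_mul_of_nonneg_right hab2 (sq_nonneg _)
      have h2 : (a - b) ^ 2 * (a + b) ^ 2 ≤ (α - β) ^ 2 := hxy ▸ hxyab
      have h3 : 4 * β * (a - b) ^ 2 ≤ (α - β) ^ 2 := by
        calc 4 * β * (a - b) ^ 2 ≤ (a + b) ^ 2 * (a - b) ^ 2 := h1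
          _ = (a - b) ^ 2 * (a + b) ^ 2 := mul_comm _ _
          _ ≤ (α - β) ^ 2 := h2
      linarith
    have hkey := exp_secant_bound T s hT hs0 hsT
    -- (x - y)^2 ≤ 8 * α * s
    have hub : (x - y) ^ 2 ≤ 8 * α * s := by
      have h4α : (a + b) ^ 2 ≤ 4 * α := by
        have h1 : a + b ≤ 2 * Real.sqrt α := by linarith
        have h2 := pow_le_pow_left₀ (by positivity : (0:ℝ) ≤ a + b) h1 2
        nlinarith [h2, hsα]
      calc (x - y) ^ 2 = (a - b) ^ 2 * (a + b) ^ 2 := hxy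
        _ ≤ (a - b) ^ 2 * (4 * α) := by
            exact mul_le_mul_of_nonneg_left h4α (sq_nonneg _)
        _ = 8 * α * s := by rw [hsdef]; ring
    have hα : 0 < α := lt_of_lt_of_le hβ hβα
    have hepos : 0 < 1 - Real.exp (-T) := by
      have : Real.exp (-T) < 1 := Real.exp_lt_one_iff.2 (by linarith)
      linarith
    have hexp : Real.exp (-(1/2) * (a - b) ^ 2) = Real.exp (-s) := by
      rw [hsdef]; ring_nf
    rw [hexp]
    calc (1 - Real.exp (-T)) / (4 * α * T) * (x - y) ^ 2
        ≤ (1 - Real.exp (-T)) / (4 * α * T) * (8 * α * s) := by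
          exact mul_le_mul_of_nonneg_left hub (by positivity)
      _ = 2 * ((1 - Real.exp (-T)) / T * s) := by field_simp; ring
      _ ≤ 2 * (1 - Real.exp (-s)) := by linarith
      _ = 2 - 2 * Real.exp (-s) := by ring
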